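/- Let x, y, s, t be integers such that x^2 + s^2 - s^4 = -t^2 and y^2 + t^2 - t^4 = s^2 - 1. Then (x,y,s,t) = (0, 0, ±1, 0). -/
import Mathlib

private lemma between_sq (x n : ℤ) (hn : 1 ≤ n) (h2 : x^2 < n^2) : x^2 ≤ (n-1)^2 := by
  have h3 : x < n := by nlinarith
  have h4 : -n < x := by nlinarith
  nlinarith [mul_nonneg (by linarith : (0:ℤ) ≤ n-1-x) (by linarith : (0:ℤ) ≤ n-1+x)]

private lemma consec_sq (a b : ℤ) (hb : 1 ≤ b^2) (h : a^2 = b^2 + 1) : False := by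
  have h1 : |b| < |a| := by
    by_contra hc
    push_neg at hc
    nlinarith [sq_abs a, sq_abs b, abs_nonneg a, abs_nonneg b,
      mul_le_mul hc hc (abs_nonneg a) (abs_nonneg b)]
  have h2 : |b| + 1 ≤ |a| := h1
  have hb1 : 1 ≤ |b| := by nlinarith [sq_abs b, abs_nonneg b]
  nlinarith [sq_abs a, sq_abs b, mul_le_mul h2 h2 (by linarith [abs_nonneg b]) (abs_nonneg a)]

theorem stmt_5 (x y s t : ℤ)
    (h1 : x^2 + s^2 - s^4 = -t^2) (h2 : y^2 + t^2 - t^4 = s^2 - 1) :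
    x = 0 ∧ y = 0 ∧ (s = 1 ∨ s = -1) ∧ t = 0 := by
  have hx : x^2 = s^4 - s^2 - t^2 := by linarith
  have hy : y^2 = t^4 - t^2 + s^2 - 1 := by linarith
  have hx0 := sq_nonneg x
  have hy0 := sq_nonneg y
  have ht0 := sq_nonneg t
  have hs0 := sq_nonneg s
  have ht : t = 0 := by
    by_contra ht
    have ht1 : 1 ≤ t^2 := by
      rcases lt_or_gt_of_ne ht with h | h <;> nlinarith
    have hs1 : 1 ≤ s^2 := by nlinarith
    -- step 1: t^2 ≥ s^2 - 1
    have step1 : s^2 - 1 ≤ t^2 := by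
      by_contra hc
      push_neg at hc
      have h2' : x^2 < (s^2)^2 := by nlinarith
      have := between_sq x (s^2) hs1 h2'
      nlinarith
    rcases eq_or_lt_of_le step1 with heq | hlt
    · -- t^2 = s^2 - 1, consecutive squares
      exact consec_sq s t ht1 (by linarith)
    · -- t^2 ≥ s^2
      have h2' : y^2 < (t^2)^2 := by nlinarith
      have := between_sq y (t^2) ht1 h2'
      -- gives s^2 + t^2 ≤ 2, so s^2 = t^2 = 1, but then x^2 = -1
      nlinarith
  subst ht
  have hy' : s^2 = y^2 + 1 := by linarith
  have hyz : y = 0 := by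
    by_contra hyne
    have : 1 ≤ y^2 := by
      rcases lt_or_gt_of_ne hyne with h | h <;> nlinarith
    exact consec_sq s y this hy'
  subst hyz
  have hs2 : s^2 = 1 := by linarith
  have hxz : x = 0 := by
    have : x^2 = 0 := by nlinarith
    exact pow_eq_zero_iff (by norm_num) |>.mp this
  refine ⟨hxz, rfl, ?_, rfl⟩
  have : (s - 1) * (s + 1) = 0 := by nlinarith
  rcases mul_eq_zero.mp this with h | h
  · left; linarith
  · right; linarith
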